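/- For all real numbers a and τ with 4 ≤ a ≤ τ, one has ∫_a^τ e^s / s² ds ≤ 2 e^τ / τ². -/

import Mathlib

/-- For all real `a`, `τ` with `4 ≤ a ≤ τ`, one has `∫_a^τ e^s/s² ds ≤ 2 e^τ/τ²`. -/
theorem integral_exp_div_sq_le (a τ : ℝ) (ha : 4 ≤ a) (haτ : a ≤ τ) :
    ∫ s in a..τ, Real.exp s / s ^ 2 ≤ 2 * Real.exp τ / τ ^ 2 := by
  have h4τ : (4:ℝ) ≤ τ := le_trans ha haτ
  have ha0 : (0:ℝ) < a := by linarith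
  set g : ℝ → ℝ := fun s => 2 * Real.exp s / s ^ 2 with hg
  have hne : ∀ s ∈ Set.uIcc a τ, s ≠ 0 := by
    intro s hs
    rw [Set.uIcc_of_le haτ] at hs
    exact ne_of_gt (lt_of_lt_of_le ha0 hs.1)
  have hderiv : ∀ s ∈ Set.uIcc a τ,
      HasDerivAt g (2 * Real.exp s / s ^ 2 - 4 * Real.exp s / s ^ 3) s := by
    intro s hs
    have hs0 : s ≠ 0 := hne s hs
    have h1 : HasDerivAt (fun s => 2 * Real.exp s) (2 * Real.exp s) s :=
      (Real.hasDerivAt_exp s).const_mul 2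
    have h2 : HasDerivAt (fun s : ℝ => s ^ 2) (2 * s) s := by
      simpa using hasDerivAt_pow 2 s
    have h3 : HasDerivAt (fun s => 2 * Real.exp s / s ^ 2)
        ((2 * Real.exp s * s ^ 2 - 2 * Real.exp s * (2 * s)) / (s ^ 2) ^ 2) s :=
      h1.div h2 (pow_ne_zero 2 hs0)
    convert h3 using 1
    field_simp
    ring
  have hint1 : IntervalIntegrable (fun s => Real.exp s / s ^ 2)
      MeasureTheory.volume a τ := by
    apply ContinuousOn.intervalIntegrable
    exact Real.continuous_exp.continuousOn.div (continuousOn_pow 2)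
      (fun s hs => pow_ne_zero 2 (hne s hs))
  have hint2 : IntervalIntegrable (fun s => 2 * Real.exp s / s ^ 2 - 4 * Real.exp s / s ^ 3)
      MeasureTheory.volume a τ := by
    apply ContinuousOn.intervalIntegrable
    apply ContinuousOn.sub
    · exact ((continuous_const.mul Real.continuous_exp).continuousOn).div
        (continuousOn_pow 2) (fun s hs => pow_ne_zero 2 (hne s hs))
    · exact ((continuous_const.mul Real.continuous_exp).continuousOn).div
        (continuousOn_pow 3) (fun s hs => pow_ne_zero 3 (hne s hs))
  have key : ∫ s in a..τ, Real.exp s / s ^ 2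
      ≤ ∫ s in a..τ, (2 * Real.exp s / s ^ 2 - 4 * Real.exp s / s ^ 3) := by
    apply intervalIntegral.integral_mono_on haτ hint1 hint2
    intro s hs
    have hs4 : 4 ≤ s := le_trans ha hs.1
    have hsp : (0:ℝ) < s := by linarith
    have he : 0 < Real.exp s := Real.exp_pos s
    have h5 : 4 * Real.exp s / s ^ 3 ≤ Real.exp s / s ^ 2 := by
      rw [div_le_div_iff₀ (by positivity) (by positivity)]
      nlinarith [mul_nonneg (mul_nonneg he.le (sq_nonneg s)) (by linarith : (0:ℝ) ≤ s - 4)]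
    have h6 : 2 * Real.exp s / s ^ 2 = 2 * (Real.exp s / s ^ 2) := by ring
    linarith
  have hFTC : ∫ s in a..τ, (2 * Real.exp s / s ^ 2 - 4 * Real.exp s / s ^ 3)
      = g τ - g a := intervalIntegral.integral_eq_sub_of_hasDerivAt hderiv hint2
  have hga : 0 ≤ g a := by positivity
  have : g τ = 2 * Real.exp τ / τ ^ 2 := rfl
  linarith
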